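/- arXiv:0712.3568 — 2 statements merged into one kernel-verified Lean document; each statement's English description precedes it below -/
import Mathlib

section
/- Let K be a full component with at most b Steiner vertices and let Δ(K) be the maximum cost of a terminal-terminal path in K. Then the loss of K satisfies l(K) ≤ b·Δ(K)/2; equivalently Δ(K) ≥ (2/b)·l(K). -/
open scoped Classical
set_option maxHeartbeats 1000000

noncomputable section

variable {V : Type*}

/-- A full component on terminal set `R`. -/
structure FullComp [Fintype V] (G : SimpleGraph V) (R : Set V) where
  sub : G.Subgraph
  tree : sub.coe.IsTree
  leaf_iff : ∀ v ∈ sub.verts, v ∈ R ↔ sub.degree v = 1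

/-- Cost of a walk: sum of the costs of its edges. -/
def walkCost (c : Sym2 V → ℝ) {G : SimpleGraph V} {u v : V} (p : G.Walk u v) : ℝ :=
  (p.edges.map c).sum

/-- `F` is a candidate loss ("connector") for the subgraph `H`. -/
def IsConnector {G : SimpleGraph V} (R : Set V) (H : G.Subgraph)
    (F : Set (Sym2 V)) : Prop :=
  F ⊆ H.edgeSet ∧ ∀ v ∈ H.verts, ∃ t ∈ R, (SimpleGraph.fromEdgeSet F).Reachable v t

open SimpleGraph

section Helpers
variable {W : Type*}

lemma degree_eq_degree {W : Type*} {G : SimpleGraph W} (v : W)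
    (i1 i2 : Fintype (G.neighborSet v)) :
    @SimpleGraph.degree W G v i1 = @SimpleGraph.degree W G v i2 := by
  rw [Subsingleton.elim i1 i2]

lemma sum_biUnion_le' {α β : Type*} [DecidableEq β] {S : Finset α} {E : α → Finset β}
    {f : β → ℝ} (hf : ∀ b, 0 ≤ f b) :
    ∑ e ∈ S.biUnion E, f e ≤ ∑ a ∈ S, ∑ e ∈ E a, f e := by
  classical
  induction S using Finset.induction_on with
  | empty => simp
  | @insert a s ha ih =>
    rw [Finset.biUnion_insert, Finset.sum_insert ha]
    have h1 := Finset.sum_union_inter (s₁ := E a) (s₂ := s.biUnion E) (f := f)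
    have h2 : (0:ℝ) ≤ ∑ e ∈ (E a ∩ s.biUnion E), f e :=
      Finset.sum_nonneg fun e _ => hf e
    linarith [ih]

lemma exists_path_to_leaf [Fintype W] {T : SimpleGraph W}
    (hT : T.IsAcyclic) {v w : W} (h : T.Adj v w) :
    ∃ (t : W) (q : T.Walk w t), (Walk.cons h q).IsPath ∧ T.degree t = 1 := by
  classical
  set N : Set ℕ := {n | ∃ (t : W) (q : T.Walk w t), (Walk.cons h q).IsPath ∧ q.length = n} with hN
  have hne : N.Nonempty := ⟨0, w, .nil, by simp [Walk.cons_isPath_iff, h.ne], rfl⟩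
  have hbdd : BddAbove N := by
    refine ⟨Fintype.card W, fun n hn => ?_⟩
    obtain ⟨t, q, hq, rfl⟩ := hn
    have := hq.length_lt
    simp only [Walk.length_cons] at this
    omega
  obtain ⟨t, q, hq, hlen⟩ := Nat.sSup_mem hne hbdd
  set p := Walk.cons h q with hpdef
  have hp : p.IsPath := hq
  have htv : t ≠ v := by
    intro hteq
    have hvq : v ∉ q.support := (Walk.cons_isPath_iff h q).mp hq |>.2
    exact hvq (hteq ▸ q.end_mem_support)
  obtain ⟨x, h₀, r, hrev⟩ := Walk.exists_eq_cons_of_ne htv p.reverse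
  have hkey : ∀ u, T.Adj t u → u = x := by
    intro u hu
    by_contra hux
    by_cases hmem : u ∈ p.support
    · -- cycle case : two distinct paths from t to u
      have hmem' : u ∈ p.reverse.support := by rwa [Walk.support_reverse, List.mem_reverse]
      set A := p.reverse.takeUntil u hmem' with hA
      have hApath : A.IsPath := hp.reverse.takeUntil _
      have hBpath : (Walk.cons hu .nil).IsPath := by simp [Walk.cons_isPath_iff, hu.ne]
      have hAB : A = Walk.cons hu .nil := by
        have := (isAcyclic_iff_path_unique.mp hT) ⟨A, hApath⟩ ⟨Walk.cons hu .nil, hBpath⟩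
        exact congrArg Subtype.val this
      have h1 : p.reverse.support = t :: u :: (p.reverse.dropUntil u hmem').support.tail := by
        conv_lhs => rw [← Walk.take_spec p.reverse hmem']
        rw [Walk.support_append, ← hA, hAB]
        simp
      have h2 : p.reverse.support = t :: x :: r.support.tail := by
        rw [hrev, Walk.support_cons]
        conv_lhs => rw [r.support_eq_cons]
      rw [h1] at h2
      injection h2 with h3 h4
      injection h4 with h5 h6
      exact hux h5
    · -- extension case
      have hcons : (Walk.cons h (q.concat hu)).IsPath := by
        have hns := hp.support_nodup
        rw [← Walk.concat_cons, Walk.isPath_def, Walk.support_concat,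
          List.nodup_append]
        exact ⟨hns, List.nodup_singleton u, by
          intro a ha b hb hab; rw [List.mem_singleton] at hb; subst hb; subst hab; exact hmem ha⟩
      have : q.length + 1 ∈ N := ⟨u, q.concat hu, hcons, by simp [Walk.length_concat]⟩
      have := le_csSup hbdd this
      omega
  have hxmem : x ∈ T.neighborFinset t := by rw [mem_neighborFinset]; exact h₀
  have : T.neighborFinset t = {x} := by
    ext u
    simp only [mem_neighborFinset, Finset.mem_singleton]
    exact ⟨hkey u, fun hux => hux ▸ h₀⟩
  refine ⟨t, q, hq, ?_⟩
  rw [← card_neighborFinset_eq_degree, this, Finset.card_singleton]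

lemma exists_cheap_path [Fintype W] {T : SimpleGraph W} (hT : T.IsTree)
    (c' : Sym2 W → ℝ) (Δ : ℝ)
    (hΔ : ∀ (t1 t2 : W), T.degree t1 = 1 → T.degree t2 = 1 →
      ∀ p : T.Walk t1 t2, p.IsPath → (p.edges.map c').sum ≤ Δ)
    {s : W} (hdeg : 2 ≤ T.degree s) :
    ∃ (t : W) (p : T.Walk s t), p.IsPath ∧ T.degree t = 1 ∧
      2 * (p.edges.map c').sum ≤ Δ := by
  classical
  have hcard : 1 < (T.neighborFinset s).card := by
    rwa [card_neighborFinset_eq_degree]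
  obtain ⟨w1, hw1, w2, hw2, hw12⟩ := Finset.one_lt_card.mp hcard
  rw [mem_neighborFinset] at hw1 hw2
  obtain ⟨t1, q1, hp1, hd1⟩ := exists_path_to_leaf hT.2 hw1
  obtain ⟨t2, q2, hp2, hd2⟩ := exists_path_to_leaf hT.2 hw2
  have hsq1 : s ∉ q1.support := ((Walk.cons_isPath_iff _ _).mp hp1).2
  have hsq2 : s ∉ q2.support := ((Walk.cons_isPath_iff _ _).mp hp2).2
  -- supports of q1 and q2 are disjoint
  have hdisj : ∀ x, x ∈ q1.support → x ∈ q2.support → False := by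
    intro x hx1 hx2
    have hq1p : q1.IsPath := hp1.of_cons
    have hq2p : q2.IsPath := hp2.of_cons
    set A := Walk.cons hw1 (q1.takeUntil x hx1) with hA
    set B := Walk.cons hw2 (q2.takeUntil x hx2) with hB
    have hApath : A.IsPath := by
      rw [hA, Walk.cons_isPath_iff]
      exact ⟨hq1p.takeUntil _, fun hs => hsq1 (Walk.support_takeUntil_subset _ _ hs)⟩
    have hBpath : B.IsPath := by
      rw [hB, Walk.cons_isPath_iff]
      exact ⟨hq2p.takeUntil _, fun hs => hsq2 (Walk.support_takeUntil_subset _ _ hs)⟩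
    have hAB : A = B := by
      have := (isAcyclic_iff_path_unique.mp hT.2) ⟨A, hApath⟩ ⟨B, hBpath⟩
      exact congrArg Subtype.val this
    have hsup := congrArg Walk.support hAB
    rw [hA, hB, Walk.support_cons, Walk.support_cons,
      (q1.takeUntil x hx1).support_eq_cons, (q2.takeUntil x hx2).support_eq_cons] at hsup
    injection hsup with h3 h4
    injection h4 with h5 h6
    exact hw12 h5
  set P1 := Walk.cons hw1 q1 with hP1
  set P2 := Walk.cons hw2 q2 with hP2
  have hPP : (P1.reverse.append P2).IsPath := by
    rw [Walk.isPath_def, Walk.support_append, List.nodup_append]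
    refine ⟨by rw [Walk.support_reverse]; exact List.nodup_reverse.mpr hp1.support_nodup, ?_, ?_⟩
    · rw [hP2, Walk.support_cons, List.tail_cons]
      exact hp2.of_cons.support_nodup
    · intro y hy y' hy' hyy'
      subst hyy'
      rw [Walk.support_reverse, List.mem_reverse, hP1, Walk.support_cons] at hy
      rw [hP2, Walk.support_cons, List.tail_cons] at hy'
      rcases List.mem_cons.mp hy with rfl | hy
      · exact hsq2 hy'
      · exact hdisj y hy hy'
  have hcost := hΔ t1 t2 hd1 hd2 _ hPP
  rw [Walk.edges_append, Walk.edges_reverse, List.map_append, List.sum_append,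
    List.map_reverse, List.sum_reverse] at hcost
  rcases le_total ((P1.edges.map c').sum) ((P2.edges.map c').sum) with hle | hle
  · exact ⟨t1, P1, hp1, hd1, by linarith⟩
  · exact ⟨t2, P2, hp2, hd2, by linarith⟩

end Helpers

/-- Let `K` be a full component with at most `b` Steiner vertices and
let `Δ` be the maximum cost of a terminal-terminal path in `K`.  Then the loss of `K`
satisfies `l(K) ≤ b·Δ/2`, equivalently `Δ ≥ (2/b)·l(K)`. -/
theorem stmt9 [Fintype V] (G : SimpleGraph V) (R : Finset V)
    (c : Sym2 V → ℝ) (hc : ∀ e, 0 ≤ c e)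
    (K : FullComp G (R : Set V)) (b : ℕ) (hb : 1 ≤ b)
    (hcount : (K.sub.verts \ (R : Set V)).ncard ≤ b)
    (Δ : ℝ)
    (hΔ : IsGreatest {x : ℝ | ∃ u v, u ∈ K.sub.verts ∧ u ∈ (R : Set V) ∧
      v ∈ K.sub.verts ∧ v ∈ (R : Set V) ∧
      ∃ p : K.sub.spanningCoe.Walk u v, p.IsPath ∧ walkCost c p = x} Δ)
    (F₀ : Set (Sym2 V)) (hF₀ : IsConnector (R : Set V) K.sub F₀)
    (hF₀min : ∀ F', IsConnector (R : Set V) K.sub F' →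
      (∑ᶠ e ∈ F₀, c e) ≤ ∑ᶠ e ∈ F', c e) :
    (∑ᶠ e ∈ F₀, c e) ≤ (b : ℝ) * Δ / 2 ∧
      (2 / (b : ℝ)) * ∑ᶠ e ∈ F₀, c e ≤ Δ := by
  classical
  obtain ⟨u0, v0, hu0v, hu0R, hv0v, hv0R, p0, hp0, hΔ0⟩ := hΔ.1
  have hΔnn : 0 ≤ Δ := by
    rw [← hΔ0]
    exact List.sum_nonneg (by rintro x hx; obtain ⟨e, -, rfl⟩ := List.mem_map.mp hx; exact hc e)
  set W := K.sub.verts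
  let f : K.sub.coe →g K.sub.spanningCoe := ⟨Subtype.val, fun {a b} hab => hab⟩
  let c' : Sym2 ↥W → ℝ := fun e => c (Sym2.map Subtype.val e)
  have hmap : ∀ {a b : ↥W} (p : K.sub.coe.Walk a b),
      walkCost c (p.map f) = (p.edges.map c').sum := by
    intro a b p
    simp only [walkCost, Walk.edges_map, List.map_map]
    rfl
  have hterm : ∀ t : ↥W, K.sub.coe.degree t = 1 → ↑t ∈ (R : Set V) := by
    intro t h
    refine (K.leaf_iff ↑t t.2).mpr ?_
    rw [← Subgraph.coe_degree]
    convert h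
  have hΔ' : ∀ (t1 t2 : ↥W), K.sub.coe.degree t1 = 1 → K.sub.coe.degree t2 = 1 →
      ∀ p : K.sub.coe.Walk t1 t2, p.IsPath → (p.edges.map c').sum ≤ Δ := by
    intro t1 t2 h1 h2 p hp
    have := hΔ.2 ⟨↑t1, ↑t2, t1.2, hterm t1 h1, t2.2, hterm t2 h2, p.map f,
      Walk.map_isPath_of_injective Subtype.val_injective hp, rfl⟩
    rwa [hmap p] at this
  have hdeg2 : ∀ s : ↥W, ↑s ∉ (R : Set V) → 2 ≤ K.sub.coe.degree s := by
    intro s hs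
    have hne1 : K.sub.coe.degree s ≠ 1 := by
      intro h
      exact hs (hterm s h)
    have hpos : 0 < K.sub.coe.degree s := by
      have hsu : s ≠ (⟨u0, hu0v⟩ : ↥W) := by
        intro h
        exact hs (by rw [h]; exact hu0R)
      obtain ⟨p⟩ := K.tree.isConnected.preconnected s ⟨u0, hu0v⟩
      obtain ⟨x, hadj, -, -⟩ := Walk.exists_eq_cons_of_ne hsu p
      rw [← card_neighborFinset_eq_degree, Finset.card_pos]
      exact ⟨x, by rw [mem_neighborFinset]; exact hadj⟩
    omega
  -- key packaged statement at the V level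
  have key' : ∀ v : V, ∃ (tv : V) (Ev : Finset (Sym2 V)),
      (v ∈ K.sub.verts ∧ v ∉ (R : Set V)) →
        tv ∈ (R : Set V) ∧ (↑Ev : Set (Sym2 V)) ⊆ K.sub.edgeSet ∧
        (SimpleGraph.fromEdgeSet (↑Ev : Set (Sym2 V))).Reachable v tv ∧
        2 * (∑ e ∈ Ev, c e) ≤ Δ := by
    intro v
    by_cases hv : v ∈ K.sub.verts ∧ v ∉ (R : Set V)
    swap
    · exact ⟨v, ∅, fun h => absurd h hv⟩
    obtain ⟨t, p, hp, hdt, hcost⟩ := exists_cheap_path K.tree c' Δ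
      (fun t1 t2 h1 h2 p hp => hΔ' t1 t2 ((degree_eq_degree t1 _ _).trans h1)
        ((degree_eq_degree t2 _ _).trans h2) p hp)
      (le_trans (hdeg2 ⟨v, hv.1⟩ hv.2) (le_of_eq (degree_eq_degree _ _ _)))
    set q : K.sub.spanningCoe.Walk v ↑t := Walk.map f p with hq
    have hqpath : q.IsPath := Walk.map_isPath_of_injective Subtype.val_injective hp
    have hqnodup : q.edges.Nodup := hqpath.edges_nodup
    refine ⟨↑t, q.edges.toFinset, fun _ => ⟨hterm t ((degree_eq_degree t _ _).trans hdt), ?_, ?_, ?_⟩⟩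
    · intro e he
      rw [Finset.mem_coe, List.mem_toFinset] at he
      have h1 := Walk.edges_subset_edgeSet _ he
      revert h1
      induction e using Sym2.ind with
      | _ a b => exact fun h => h
    · refine ⟨q.transfer _ fun e he => ?_⟩
      rw [edgeSet_fromEdgeSet]
      exact ⟨by rw [Finset.mem_coe, List.mem_toFinset]; exact he,
        not_isDiag_of_mem_edgeSet _ (Walk.edges_subset_edgeSet _ he)⟩
    · rw [List.sum_toFinset _ hqnodup]
      have : (q.edges.map c).sum = (p.edges.map c').sum := hmap p
      rw [this]
      exact hcost
  choose tfun Efun hspec using key'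
  set S' : Finset V := (Set.toFinite (K.sub.verts \ (R : Set V))).toFinset with hS'
  have hmemS' : ∀ {v : V}, v ∈ S' ↔ v ∈ K.sub.verts ∧ v ∉ (R : Set V) := by
    intro v
    rw [hS', Set.Finite.mem_toFinset, Set.mem_diff]
  set F' : Set (Sym2 V) := ↑(S'.biUnion Efun) with hF'
  have hconn : IsConnector (R : Set V) K.sub F' := by
    constructor
    · intro e he
      rw [hF', Finset.mem_coe, Finset.mem_biUnion] at he
      obtain ⟨v, hv, he⟩ := he
      exact (hspec v (hmemS'.mp hv)).2.1 (Finset.mem_coe.mpr he)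
    · intro v hv
      by_cases hvR : v ∈ (R : Set V)
      · exact ⟨v, hvR, Reachable.refl v⟩
      · have hvS : v ∈ S' := hmemS'.mpr ⟨hv, hvR⟩
        obtain ⟨htR, -, hreach, -⟩ := hspec v ⟨hv, hvR⟩
        refine ⟨tfun v, htR, hreach.mono (fromEdgeSet_mono ?_)⟩
        rw [hF']
        exact_mod_cast Finset.subset_biUnion_of_mem Efun hvS
  have hcost' : (∑ᶠ e ∈ F', c e) ≤ (b : ℝ) * Δ / 2 := by
    rw [hF', finsum_mem_coe_finset]
    calc ∑ e ∈ S'.biUnion Efun, c e ≤ ∑ v ∈ S', ∑ e ∈ Efun v, c e := sum_biUnion_le' hc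
      _ ≤ S'.card • (Δ / 2) := by
          refine Finset.sum_le_card_nsmul _ _ _ ?_
          intro v hv
          have := (hspec v (hmemS'.mp hv)).2.2.2
          linarith
      _ ≤ (b : ℝ) * Δ / 2 := by
          rw [nsmul_eq_mul]
          have hcard : (S'.card : ℝ) ≤ (b : ℝ) := by
            have : S'.card = (K.sub.verts \ (R : Set V)).ncard := by
              rw [hS', Set.ncard_eq_toFinset_card _ (Set.toFinite _)]
            exact_mod_cast this ▸ hcount
          nlinarith
  have hmain : (∑ᶠ e ∈ F₀, c e) ≤ (b : ℝ) * Δ / 2 :=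
    le_trans (hF₀min F' hconn) hcost'
  refine ⟨hmain, ?_⟩
  have hbpos : (0 : ℝ) < b := by exact_mod_cast hb
  rw [div_mul_eq_mul_div, div_le_iff₀ hbpos]
  calc 2 * ∑ᶠ e ∈ F₀, c e ≤ 2 * ((b : ℝ) * Δ / 2) := by linarith
    _ = Δ * b := by ring
end
end

section
/- If S ⊆ S' are families of full components, then every feasible solution x of the partition LP (P_ST^S) extends to a feasible solution x' of (P_ST^{S'}) with the same objective value, by setting x'_e = x_J for each edge e of each J ∈ S' \ S and keeping all other coordinates. Consequently, the integrality gap of (P_ST^S) is at most that of (P_ST^{S'}). -/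
open scoped Classical

noncomputable section

variable {V : Type*}

variable [Fintype V] {G : SimpleGraph V} {R : Finset V}

/-- Feasibility for the partition LP `(P_ST^𝒮)`: nonnegativity, finite support of the
full-component variables, and for every partition `π` of `V(𝒮) ∪ R` (a `Finpartition`
of the finset `W`), the generalized Steiner partition inequality
`∑_{e ∈ E_π(𝒮)} x_e + ∑_{K ∈ 𝒦 \ 𝒮} rc^π_K x_K ≥ r̄(π) − 1`. -/
def LPFeasible (𝒦 : Set (FullComp G (R : Set V))) (𝒮 : Finset (FullComp G (R : Set V)))
    (W : Finset V) (xe : Sym2 V → ℝ) (xK : FullComp G (R : Set V) → ℝ) : Prop :=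
  (∀ e, 0 ≤ xe e) ∧ (∀ K, 0 ≤ xK K) ∧ (Function.support xK).Finite ∧
  ∀ π : Finpartition W,
    ((π.parts.filter fun P => ∃ t ∈ P, t ∈ R).card : ℝ) - 1 ≤
      (∑ᶠ e ∈ {e ∈ ⋃ K ∈ 𝒮, K.sub.edgeSet | ¬ ∃ P ∈ π.parts, ∀ v ∈ e, v ∈ P}, xe e)
      + ∑ᶠ K ∈ 𝒦 \ (𝒮 : Set (FullComp G (R : Set V))),
          (((π.parts.filter fun P => ∃ t ∈ P, t ∈ (R : Set V) ∧ t ∈ K.sub.verts).card : ℝ)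
              - 1) * xK K

/-- Objective value of the partition LP `(P_ST^𝒮)`. -/
def LPObj (c : Sym2 V → ℝ) (𝒦 : Set (FullComp G (R : Set V)))
    (𝒮 : Finset (FullComp G (R : Set V)))
    (xe : Sym2 V → ℝ) (xK : FullComp G (R : Set V) → ℝ) : ℝ :=
  (∑ᶠ e ∈ ⋃ K ∈ 𝒮, K.sub.edgeSet, c e * xe e)
    + ∑ᶠ K ∈ 𝒦 \ (𝒮 : Set (FullComp G (R : Set V))),
        (∑ᶠ e ∈ K.sub.edgeSet, c e) * xK K

section Aux

set_option linter.unusedSectionVars false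

/-! ### Graph-theoretic crossing bound -/

lemma walk_const {α : Type*} {H : G.Subgraph} (q : V → α)
    (hnc : ∀ e ∈ H.edgeSet, (Sym2.map q e).IsDiag) :
    ∀ {a b : H.verts} (_ : H.coe.Walk a b), q a = q b := by
  intro a b p
  induction p with
  | nil => rfl
  | @cons u v w h p ih =>
    have hadj : H.Adj u.1 v.1 := h
    have hd : (Sym2.map q s(u.1, v.1)).IsDiag :=
      hnc _ (SimpleGraph.Subgraph.mem_edgeSet.mpr hadj)
    rw [Sym2.map_pair_eq, Sym2.mk_isDiag_iff] at hd
    exact hd.trans ih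

lemma ncard_le_one_of_no_crossing {α : Type*} {H : G.Subgraph} (hpc : H.coe.Preconnected)
    (q : V → α) (hnc : ∀ e ∈ H.edgeSet, (Sym2.map q e).IsDiag)
    {T : Set V} (hT : T ⊆ H.verts) : (q '' T).ncard ≤ 1 := by
  rcases T.eq_empty_or_nonempty with rfl | ⟨t₀, ht₀⟩
  · simp
  · have hsub : q '' T ⊆ {q t₀} := by
      rintro _ ⟨t, ht, rfl⟩
      obtain ⟨p⟩ := hpc ⟨t, hT ht⟩ ⟨t₀, hT ht₀⟩
      exact walk_const q hnc p
    simpa using Set.ncard_le_ncard hsub (Set.finite_singleton _)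

/-- A connected subgraph whose vertex subset `T` meets `n + 1` classes of `q` has at least
`n` edges whose endpoints lie in different classes of `q`. -/
lemma crossing_main {α : Type*} {H : G.Subgraph} (hpc : H.coe.Preconnected) :
    ∀ (n : ℕ) (q : V → α), {e ∈ H.edgeSet | ¬ (Sym2.map q e).IsDiag}.ncard ≤ n →
    ∀ T : Set V, T ⊆ H.verts → (q '' T).ncard ≤ n + 1 := by
  intro n
  induction n with
  | zero =>
    intro q hq T hT
    refine ncard_le_one_of_no_crossing hpc q (fun e he => ?_) hT
    by_contra hcon
    have : {e ∈ H.edgeSet | ¬ (Sym2.map q e).IsDiag}.Nonempty := ⟨e, he, hcon⟩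
    have := this.ncard_pos (Set.toFinite _)
    omega
  | succ n ih =>
    intro q hq T hT
    by_cases h0 : ∀ e ∈ H.edgeSet, (Sym2.map q e).IsDiag
    · exact le_trans (ncard_le_one_of_no_crossing hpc q h0 hT) (by omega)
    · push_neg at h0
      obtain ⟨e₀, he₀E, he₀⟩ := h0
      induction e₀ using Sym2.inductionOn with
      | _ u v =>
      have hne : q u ≠ q v := by
        rw [Sym2.map_pair_eq, Sym2.mk_isDiag_iff] at he₀; exact he₀
      set q' : V → α := fun w => if q w = q v then q u else q w with hq'
      have hq'u : q' u = q u := by simp [hq', hne]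
      have hq'v : q' v = q u := by simp [hq']
      have hsub : {e ∈ H.edgeSet | ¬ (Sym2.map q' e).IsDiag} ⊆
          {e ∈ H.edgeSet | ¬ (Sym2.map q e).IsDiag} \ {s(u, v)} := by
        intro e he
        induction e using Sym2.inductionOn with
        | _ a b =>
        obtain ⟨heE, hcr⟩ := he
        rw [Sym2.map_pair_eq, Sym2.mk_isDiag_iff] at hcr
        have hab : q a ≠ q b := by
          intro h; apply hcr; simp only [hq']; rw [h]
        refine ⟨⟨heE, by rw [Sym2.map_pair_eq, Sym2.mk_isDiag_iff]; exact hab⟩, ?_⟩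
        intro hmem
        rw [Set.mem_singleton_iff, Sym2.eq_iff] at hmem
        rcases hmem with ⟨rfl, rfl⟩ | ⟨rfl, rfl⟩
        · exact hcr (hq'u.trans hq'v.symm)
        · exact hcr (hq'v.trans hq'u.symm)
      have hmem₀ : s(u, v) ∈ {e ∈ H.edgeSet | ¬ (Sym2.map q e).IsDiag} := ⟨he₀E, he₀⟩
      have hlt : {e ∈ H.edgeSet | ¬ (Sym2.map q' e).IsDiag}.ncard ≤ n := by
        have h1 := Set.ncard_diff_singleton_lt_of_mem hmem₀ (Set.toFinite _)
        have h2 := Set.ncard_le_ncard hsub (Set.toFinite _)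
        omega
      have hT' := ih q' hlt T hT
      have himg : q '' T ⊆ (q' '' T) ∪ {q v} := by
        rintro _ ⟨t, ht, rfl⟩
        by_cases h : q t = q v
        · right; simp [h]
        · left; exact ⟨t, ht, by simp [hq', h]⟩
      have := Set.ncard_le_ncard himg ((T.toFinite.image q').union (Set.finite_singleton _))
      have h3 := Set.ncard_union_le (q' '' T) {q v}
      simp only [Set.ncard_singleton] at h3
      omega

lemma edge_mem_verts (H : G.Subgraph) :
    ∀ e ∈ H.edgeSet, ∀ v ∈ e, v ∈ H.verts := by
  intro e
  induction e using Sym2.inductionOn with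
  | _ a b =>
  intro he v hv
  have h := SimpleGraph.Subgraph.mem_edgeSet.mp he
  rcases Sym2.mem_iff.mp hv with rfl | rfl
  · exact h.fst_mem
  · exact h.snd_mem

/-! ### Finpartition restriction machinery -/

lemma part_filter_card (W : Finset V) (π : Finpartition W) (p : V → Prop)
    [DecidablePred fun P : Finset V => ∃ t ∈ P, p t]
    (hp : ∀ t, p t → t ∈ W) :
    (π.parts.filter fun P => ∃ t ∈ P, p t).card = (π.part '' {t | p t}).ncard := by
  rw [← Set.ncard_coe_finset]
  congr 1
  ext P
  simp only [Finset.coe_filter, Set.mem_setOf_eq, Set.mem_image]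
  constructor
  · rintro ⟨hP, t, htP, htp⟩
    exact ⟨t, htp, π.part_eq_of_mem hP htP⟩
  · rintro ⟨a, hap, rfl⟩
    exact ⟨π.part_mem.mpr (hp _ hap), a, π.mem_part (hp _ hap), hap⟩

/-- the restriction of a finpartition to a subset, as fibers of the part map -/
def restrictPart (W : Finset V) {W' : Finset V} (π' : Finpartition W') : Finpartition W where
  parts := W.image fun v => W.filter fun w => π'.part w = π'.part v
  supIndep := by
    rw [Finset.supIndep_iff_pairwiseDisjoint]
    intro P hP Q hQ hne
    simp only [Finset.coe_image, Set.mem_image, Finset.mem_coe] at hP hQ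
    obtain ⟨a, ha, rfl⟩ := hP
    obtain ⟨b, hb, rfl⟩ := hQ
    simp only [Function.onFun, id]
    rw [Finset.disjoint_left]
    intro w hw1 hw2
    simp only [Finset.mem_filter] at hw1 hw2
    exact hne (by rw [← hw1.2, hw2.2])
  sup_parts := by
    apply le_antisymm
    · refine Finset.sup_le fun P hP => ?_
      simp only [Finset.mem_image] at hP
      obtain ⟨a, _, rfl⟩ := hP
      exact Finset.filter_subset _ _
    · intro w hw
      rw [Finset.mem_sup]
      exact ⟨W.filter fun x => π'.part x = π'.part w,
        Finset.mem_image_of_mem _ hw, by simp [hw]⟩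
  bot_notMem := by
    simp only [Finset.bot_eq_empty, Finset.mem_image]
    rintro ⟨a, ha, hcon⟩
    have : a ∈ W.filter fun w => π'.part w = π'.part a := by simp [ha]
    rw [hcon] at this
    exact absurd this (Finset.notMem_empty a)

lemma restrictPart_mem_iff {W W' : Finset V} (π' : Finpartition W') {u v : V}
    (hu : u ∈ W) (hv : v ∈ W) :
    (∃ P ∈ (restrictPart W π').parts, u ∈ P ∧ v ∈ P) ↔ π'.part u = π'.part v := by
  constructor
  · rintro ⟨P, hP, huP, hvP⟩
    simp only [restrictPart, Finset.mem_image] at hP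
    obtain ⟨a, _, rfl⟩ := hP
    simp only [Finset.mem_filter] at huP hvP
    rw [huP.2, hvP.2]
  · intro h
    exact ⟨W.filter fun w => π'.part w = π'.part v,
      Finset.mem_image_of_mem _ hv, by simp [hu, h], by simp [hv]⟩

lemma part_mem_iff {W' : Finset V} (π' : Finpartition W') {u v : V}
    (hu : u ∈ W') (hv : v ∈ W') :
    (∃ P ∈ π'.parts, u ∈ P ∧ v ∈ P) ↔ π'.part u = π'.part v := by
  constructor
  · rintro ⟨P, hP, huP, hvP⟩
    rw [π'.part_eq_of_mem hP huP, π'.part_eq_of_mem hP hvP]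
  · intro h
    exact ⟨π'.part v, π'.part_mem.mpr hv, h ▸ π'.mem_part hu, π'.mem_part hv⟩

/-- counting transfer: parts of the restriction meeting `p` vs parts of `π'` meeting `p`. -/
lemma restrictPart_filter_card {W W' : Finset V} (π' : Finpartition W') (hWW' : W ⊆ W')
    (p : V → Prop) [DecidablePred fun P : Finset V => ∃ t ∈ P, p t]
    (hp : ∀ t, p t → t ∈ W) :
    ((restrictPart W π').parts.filter fun P => ∃ t ∈ P, p t).card
      = (π'.parts.filter fun P => ∃ t ∈ P, p t).card := by
  rw [part_filter_card W _ p hp, part_filter_card W' π' p (fun t ht => hWW' (hp t ht))]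
  have hfib : ∀ t ∈ W, (restrictPart W π').part t
      = W.filter fun w => π'.part w = π'.part t := by
    intro t ht
    exact (restrictPart W π').part_eq_of_mem (Finset.mem_image_of_mem _ ht) (by simp [ht])
  have h1 : (restrictPart W π').part '' {t | p t}
      = (fun P => W.filter fun w => π'.part w = P) '' (π'.part '' {t | p t}) := by
    rw [← Set.image_comp]
    exact Set.image_congr fun t ht => hfib t (hp t ht)
  rw [h1]
  apply Set.ncard_image_of_injOn
  rintro _ ⟨a, ha, rfl⟩ _ ⟨b, hb, rfl⟩ hab
  have haW : a ∈ W := hp a ha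
  have : a ∈ W.filter fun w => π'.part w = π'.part a := by simp [haW]
  simp only at hab
  rw [hab] at this
  simp only [Finset.mem_filter] at this
  rw [this.2]

lemma sym2_all_mem_iff {a b : V} (P : Finset V) :
    (∀ v ∈ s(a, b), v ∈ P) ↔ a ∈ P ∧ b ∈ P := by
  constructor
  · intro h; exact ⟨h a (by simp), h b (by simp)⟩
  · rintro ⟨h1, h2⟩ v hv
    rcases Sym2.mem_iff.mp hv with rfl | rfl <;> assumption

lemma cross_transfer {W W' : Finset V} (π' : Finpartition W') (hWW' : W ⊆ W') {e : Sym2 V}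
    (he : ∀ v ∈ e, v ∈ W) :
    (¬ ∃ P ∈ (restrictPart W π').parts, ∀ v ∈ e, v ∈ P)
      ↔ (¬ ∃ P ∈ π'.parts, ∀ v ∈ e, v ∈ P) := by
  induction e using Sym2.inductionOn with
  | _ a b =>
  have ha : a ∈ W := he a (by simp)
  have hb : b ∈ W := he b (by simp)
  apply not_congr
  simp only [sym2_all_mem_iff]
  rw [restrictPart_mem_iff π' ha hb, part_mem_iff π' (hWW' ha) (hWW' hb)]

lemma cross_isDiag {W' : Finset V} (π' : Finpartition W') {e : Sym2 V}
    (he : ∀ v ∈ e, v ∈ W') :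
    (¬ ∃ P ∈ π'.parts, ∀ v ∈ e, v ∈ P) ↔ ¬ (Sym2.map π'.part e).IsDiag := by
  induction e using Sym2.inductionOn with
  | _ a b =>
  apply not_congr
  rw [Sym2.map_pair_eq, Sym2.mk_isDiag_iff]
  simp only [sym2_all_mem_iff]
  exact part_mem_iff π' (he a (by simp)) (he b (by simp))

/-! ### finsum helpers -/

lemma finsum_sep_union (f : Sym2 V → ℝ) (p : Sym2 V → Prop) {s t : Set (Sym2 V)}
    (hd : Disjoint s t) :
    ∑ᶠ e ∈ {e ∈ s ∪ t | p e}, f e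
      = (∑ᶠ e ∈ {e ∈ s | p e}, f e) + ∑ᶠ e ∈ {e ∈ t | p e}, f e := by
  rw [show {e ∈ s ∪ t | p e} = {e ∈ s | p e} ∪ {e ∈ t | p e} by
    ext e; simp only [Set.mem_sep_iff, Set.mem_union, Set.mem_setOf_eq]; tauto]
  exact finsum_mem_union (hd.mono (Set.sep_subset _ _) (Set.sep_subset _ _))
    (Set.toFinite _) (Set.toFinite _)

lemma finsum_sep_biUnion {ι : Type*} (f : Sym2 V → ℝ) (p : Sym2 V → Prop)
    (F : Finset ι) (E : ι → Set (Sym2 V))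
    (hd : ∀ K ∈ F, ∀ K' ∈ F, K ≠ K' → Disjoint (E K) (E K')) :
    ∑ᶠ e ∈ {e ∈ ⋃ K ∈ F, E K | p e}, f e
      = ∑ K ∈ F, ∑ᶠ e ∈ {e ∈ E K | p e}, f e := by
  induction F using Finset.induction_on with
  | empty => simp
  | @insert a F ha ih =>
    rw [show (⋃ K ∈ (insert a F : Finset ι), E K) = E a ∪ ⋃ K ∈ F, E K by
      simp [Set.biUnion_insert]]
    rw [finsum_sep_union f p (by
      simp only [Set.disjoint_iUnion_right]
      intro K hK
      exact hd a (Finset.mem_insert_self a F) K (Finset.mem_insert_of_mem hK)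
        (fun h => ha (h ▸ hK)))]
    rw [Finset.sum_insert ha, ih (fun K hK K' hK' hne =>
      hd K (Finset.mem_insert_of_mem hK) K' (Finset.mem_insert_of_mem hK') hne)]

lemma finsum_mem_biUnion_finset {ι : Type*} (f : Sym2 V → ℝ)
    (F : Finset ι) (E : ι → Set (Sym2 V))
    (hd : ∀ K ∈ F, ∀ K' ∈ F, K ≠ K' → Disjoint (E K) (E K')) :
    ∑ᶠ e ∈ ⋃ K ∈ F, E K, f e = ∑ K ∈ F, ∑ᶠ e ∈ E K, f e := by
  induction F using Finset.induction_on with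
  | empty => simp
  | @insert a F ha ih =>
    rw [show (⋃ K ∈ (insert a F : Finset ι), E K) = E a ∪ ⋃ K ∈ F, E K by
      simp [Set.biUnion_insert]]
    rw [finsum_mem_union (by
      simp only [Set.disjoint_iUnion_right]
      intro K hK
      exact hd a (Finset.mem_insert_self a F) K (Finset.mem_insert_of_mem hK)
        (fun h => ha (h ▸ hK))) (Set.toFinite _) (Set.toFinite _)]
    rw [Finset.sum_insert ha, ih (fun K hK K' hK' hne =>
      hd K (Finset.mem_insert_of_mem hK) K' (Finset.mem_insert_of_mem hK') hne)]

lemma finsum_mem_nonneg {ι : Type*} {s : Set ι} {f : ι → ℝ} (hf : ∀ i ∈ s, 0 ≤ f i) :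
    0 ≤ ∑ᶠ i ∈ s, f i := by
  rw [finsum_mem_def]
  exact finsum_nonneg (Set.indicator_nonneg hf)

lemma finsum_mem_const_ncard (s : Set (Sym2 V)) (x : ℝ) :
    ∑ᶠ e ∈ s, x = (s.ncard : ℝ) * x := by
  rw [finsum_mem_eq_finite_toFinset_sum _ (Set.toFinite s), Finset.sum_const,
    nsmul_eq_mul, Set.ncard_eq_toFinset_card _ (Set.toFinite s)]

lemma finsum_mem_mul_right (s : Set (Sym2 V)) (c : Sym2 V → ℝ) (x : ℝ) :
    ∑ᶠ e ∈ s, c e * x = (∑ᶠ e ∈ s, c e) * x := by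
  rw [finsum_mem_eq_finite_toFinset_sum _ (Set.toFinite s),
    finsum_mem_eq_finite_toFinset_sum _ (Set.toFinite s), ← Finset.sum_mul]

end Aux

set_option maxHeartbeats 2000000 in
/-- The extension of a feasible solution of `(P_ST^𝒮)` to `(P_ST^{𝒮'})` is feasible and has
the same objective value. -/
lemma extend_lemma (c : Sym2 V → ℝ)
    (𝒦 : Set (FullComp G (R : Set V)))
    (𝒮 𝒮' : Finset (FullComp G (R : Set V)))
    (h𝒮 : 𝒮 ⊆ 𝒮') (h𝒮'𝒦 : (𝒮' : Set (FullComp G (R : Set V))) ⊆ 𝒦)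
    (hdisjE : ∀ K K' : FullComp G (R : Set V), K ∈ 𝒦 → K' ∈ 𝒦 → K ≠ K' →
      Disjoint K.sub.edgeSet K'.sub.edgeSet)
    (W W' : Finset V)
    (hW : (W : Set V) = (R : Set V) ∪ ⋃ K ∈ 𝒮, K.sub.verts)
    (hW' : (W' : Set V) = (R : Set V) ∪ ⋃ K ∈ 𝒮', K.sub.verts)
    (xe : Sym2 V → ℝ) (xK : FullComp G (R : Set V) → ℝ)
    (hx : LPFeasible 𝒦 𝒮 W xe xK)
    (xe' : Sym2 V → ℝ) (xK' : FullComp G (R : Set V) → ℝ)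
    (hxe'old : ∀ e ∈ ⋃ K ∈ 𝒮, K.sub.edgeSet, xe' e = xe e)
    (hxe'new : ∀ J ∈ 𝒮', J ∉ 𝒮 → ∀ e ∈ J.sub.edgeSet, xe' e = xK J)
    (hxK' : ∀ K, K ∉ 𝒮' → xK' K = xK K) (hxK'0 : ∀ K ∈ 𝒮', xK' K = 0)
    (hxe'0 : ∀ e, 0 ≤ xe' e) :
    LPFeasible 𝒦 𝒮' W' xe' xK' ∧ LPObj c 𝒦 𝒮' xe' xK' = LPObj c 𝒦 𝒮 xe xK := by
  obtain ⟨hxe0, hxK0, hxsupp, hineq⟩ := hx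
  have h𝒮𝒦 : (𝒮 : Set (FullComp G (R : Set V))) ⊆ 𝒦 := fun K hK =>
    h𝒮'𝒦 (Finset.mem_coe.mpr (h𝒮 (Finset.mem_coe.mp hK)))
  have hWW' : W ⊆ W' := by
    rw [← Finset.coe_subset, hW, hW']
    refine Set.union_subset_union_right _ ?_
    intro v hv
    simp only [Set.mem_iUnion, exists_prop] at hv ⊢
    obtain ⟨K, hK, h⟩ := hv
    exact ⟨K, h𝒮 hK, h⟩
  have hRW : ∀ t ∈ R, t ∈ W := fun t ht => by
    rw [← Finset.mem_coe, hW]; exact Or.inl ht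
  have hRW' : ∀ t ∈ R, t ∈ W' := fun t ht => hWW' (hRW t ht)
  have hvertsW : ∀ K ∈ 𝒮, K.sub.verts ⊆ (W : Set V) := fun K hK => by
    rw [hW]; exact fun v hv => Or.inr (Set.mem_biUnion hK hv)
  have hvertsW' : ∀ K ∈ 𝒮', K.sub.verts ⊆ (W' : Set V) := fun K hK => by
    rw [hW']; exact fun v hv => Or.inr (Set.mem_biUnion hK hv)
  have hEW : ∀ e ∈ (⋃ K ∈ 𝒮, K.sub.edgeSet), ∀ v ∈ e, v ∈ W := by
    intro e he v hv
    simp only [Set.mem_iUnion, exists_prop] at he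
    obtain ⟨K, hK, heK⟩ := he
    exact Finset.mem_coe.mp (hvertsW K hK (edge_mem_verts K.sub e heK v hv))
  have hunionK : (𝒦 \ (𝒮' : Set (FullComp G (R : Set V))))
      ∪ ((𝒮' \ 𝒮 : Finset (FullComp G (R : Set V))) : Set (FullComp G (R : Set V)))
      = 𝒦 \ (𝒮 : Set (FullComp G (R : Set V))) := by
    ext K
    simp only [Set.mem_union, Set.mem_diff, Finset.coe_sdiff, Finset.mem_coe,
      Finset.mem_sdiff]
    constructor
    · rintro (⟨h1, h2⟩ | ⟨h1, h2⟩)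
      · exact ⟨h1, fun h => h2 (h𝒮 h)⟩
      · exact ⟨h𝒮'𝒦 (Finset.mem_coe.mpr h1), h2⟩
    · rintro ⟨h1, h2⟩
      by_cases h : K ∈ 𝒮'
      · exact Or.inr ⟨h, h2⟩
      · exact Or.inl ⟨h1, h⟩
  have hKdisj : Disjoint (𝒦 \ (𝒮' : Set (FullComp G (R : Set V))))
      ((𝒮' \ 𝒮 : Finset (FullComp G (R : Set V))) : Set (FullComp G (R : Set V))) := by
    rw [Set.disjoint_left]
    rintro K ⟨_, h2⟩ hK
    rw [Finset.mem_coe, Finset.mem_sdiff] at hK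
    exact h2 (Finset.mem_coe.mpr hK.1)
  have hEdisj2 : Disjoint (⋃ K ∈ 𝒮, K.sub.edgeSet) (⋃ J ∈ 𝒮' \ 𝒮, J.sub.edgeSet) := by
    simp only [Set.disjoint_iUnion_left, Set.disjoint_iUnion_right]
    intro J hJ K hK
    rw [Finset.mem_sdiff] at hJ
    exact hdisjE K J (h𝒮𝒦 (Finset.mem_coe.mpr hK)) (h𝒮'𝒦 (Finset.mem_coe.mpr hJ.1))
      (fun h => hJ.2 (h ▸ hK))
  have hEun : (⋃ K ∈ 𝒮', K.sub.edgeSet)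
      = (⋃ K ∈ 𝒮, K.sub.edgeSet) ∪ ⋃ J ∈ 𝒮' \ 𝒮, J.sub.edgeSet := by
    ext e
    simp only [Set.mem_iUnion, Set.mem_union, Finset.mem_sdiff, exists_prop]
    constructor
    · rintro ⟨K, hK, he⟩
      by_cases h : K ∈ 𝒮
      · exact Or.inl ⟨K, h, he⟩
      · exact Or.inr ⟨K, ⟨hK, h⟩, he⟩
    · rintro (⟨K, hK, he⟩ | ⟨K, hK, he⟩)
      · exact ⟨K, h𝒮 hK, he⟩
      · exact ⟨K, hK.1, he⟩
  have hpairdisj : ∀ K ∈ 𝒮' \ 𝒮, ∀ K' ∈ 𝒮' \ 𝒮, K ≠ K' →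
      Disjoint K.sub.edgeSet K'.sub.edgeSet := by
    intro K hK K' hK' hne
    rw [Finset.mem_sdiff] at hK hK'
    exact hdisjE K K' (h𝒮'𝒦 (Finset.mem_coe.mpr hK.1))
      (h𝒮'𝒦 (Finset.mem_coe.mpr hK'.1)) hne
  have hfinsupp : ∀ (s : Set (FullComp G (R : Set V))) (g : FullComp G (R : Set V) → ℝ),
      (s ∩ Function.support (fun K => g K * xK K)).Finite := fun s g =>
    hxsupp.subset (fun K hK => by
      have h2 := hK.2
      rw [Function.mem_support] at h2 ⊢
      exact right_ne_zero_of_mul h2)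
  constructor
  · refine ⟨hxe'0, ?_, ?_, ?_⟩
    · intro K
      by_cases h : K ∈ 𝒮'
      · rw [hxK'0 K h]
      · rw [hxK' K h]; exact hxK0 K
    · refine hxsupp.subset fun K hK => ?_
      rw [Function.mem_support] at hK ⊢
      intro h
      by_cases h' : K ∈ 𝒮'
      · exact hK (by rw [hxK'0 K h'])
      · exact hK (by rw [hxK' K h', h])
    · intro π'
      have hπ := hineq (restrictPart W π')
      rw [← hunionK, finsum_mem_union' hKdisj (hfinsupp _ _) (hfinsupp _ _),
        finsum_mem_coe_finset] at hπ
      rw [hEun, finsum_sep_union xe' _ hEdisj2,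
        finsum_sep_biUnion xe' _ (𝒮' \ 𝒮) (fun K => K.sub.edgeSet) hpairdisj]
      have hr : ((restrictPart W π').parts.filter fun P => ∃ t ∈ P, t ∈ R).card
          = (π'.parts.filter fun P => ∃ t ∈ P, t ∈ R).card :=
        restrictPart_filter_card π' hWW' (fun t => t ∈ R) hRW
      rw [← hr]
      have hA : (∑ᶠ e ∈ {e ∈ ⋃ K ∈ 𝒮, K.sub.edgeSet |
            ¬ ∃ P ∈ π'.parts, ∀ v ∈ e, v ∈ P}, xe' e)
          = ∑ᶠ e ∈ {e ∈ ⋃ K ∈ 𝒮, K.sub.edgeSet |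
            ¬ ∃ P ∈ (restrictPart W π').parts, ∀ v ∈ e, v ∈ P}, xe e := by
        apply finsum_mem_congr
        · ext e
          rw [Set.mem_sep_iff, Set.mem_sep_iff]
          exact and_congr_right fun he => (cross_transfer π' hWW' (hEW e he)).symm
        · intro e he
          exact hxe'old e he.1
      rw [hA]
      have hC : (∑ᶠ K ∈ 𝒦 \ (𝒮' : Set (FullComp G (R : Set V))),
            (((π'.parts.filter fun P =>
              ∃ t ∈ P, t ∈ (R : Set V) ∧ t ∈ K.sub.verts).card : ℝ) - 1) * xK' K)
          = ∑ᶠ K ∈ 𝒦 \ (𝒮' : Set (FullComp G (R : Set V))),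
            ((((restrictPart W π').parts.filter fun P =>
              ∃ t ∈ P, t ∈ (R : Set V) ∧ t ∈ K.sub.verts).card : ℝ) - 1) * xK K := by
        apply finsum_mem_congr rfl
        intro K hK
        rw [restrictPart_filter_card π' hWW'
            (fun t => t ∈ (R : Set V) ∧ t ∈ K.sub.verts) (fun t ht => hRW t ht.1),
          hxK' K (fun h => hK.2 (Finset.mem_coe.mpr h))]
      rw [hC]
      have hJb : ∀ J ∈ 𝒮' \ 𝒮,
          ((((restrictPart W π').parts.filter fun P =>
            ∃ t ∈ P, t ∈ (R : Set V) ∧ t ∈ J.sub.verts).card : ℝ) - 1) * xK J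
          ≤ ∑ᶠ e ∈ {e ∈ J.sub.edgeSet | ¬ ∃ P ∈ π'.parts, ∀ v ∈ e, v ∈ P}, xe' e := by
        intro J hJ
        rw [Finset.mem_sdiff] at hJ
        have hvJ := hvertsW' J hJ.1
        have hzset : {e ∈ J.sub.edgeSet | ¬ ∃ P ∈ π'.parts, ∀ v ∈ e, v ∈ P}
            = {e ∈ J.sub.edgeSet | ¬ (Sym2.map π'.part e).IsDiag} := by
          ext e
          rw [Set.mem_sep_iff, Set.mem_sep_iff]
          exact and_congr_right fun he => cross_isDiag π'
            (fun v hv => Finset.mem_coe.mp (hvJ (edge_mem_verts J.sub e he v hv)))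
        have hval : (∑ᶠ e ∈ {e ∈ J.sub.edgeSet | ¬ ∃ P ∈ π'.parts, ∀ v ∈ e, v ∈ P}, xe' e)
            = (({e ∈ J.sub.edgeSet | ¬ (Sym2.map π'.part e).IsDiag}).ncard : ℝ) * xK J := by
          rw [finsum_mem_congr rfl (fun e he => hxe'new J hJ.1 hJ.2 e he.1), hzset,
            finsum_mem_const_ncard]
        rw [hval]
        apply mul_le_mul_of_nonneg_right _ (hxK0 J)
        have hcount := crossing_main (H := J.sub) J.tree.isConnected.preconnected
          ({e ∈ J.sub.edgeSet | ¬ (Sym2.map π'.part e).IsDiag}).ncard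
          π'.part le_rfl {t | t ∈ (R : Set V) ∧ t ∈ J.sub.verts} (fun t ht => ht.2)
        rw [restrictPart_filter_card π' hWW'
            (fun t => t ∈ (R : Set V) ∧ t ∈ J.sub.verts) (fun t ht => hRW t ht.1),
          part_filter_card W' π'
            (fun t => t ∈ (R : Set V) ∧ t ∈ J.sub.verts) (fun t ht => hRW' t ht.1)]
        have h' : ((π'.part '' {t | t ∈ (R : Set V) ∧ t ∈ J.sub.verts}).ncard : ℝ)
            ≤ (({e ∈ J.sub.edgeSet | ¬ (Sym2.map π'.part e).IsDiag}).ncard : ℝ) + 1 := by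
          exact_mod_cast hcount
        linarith
      have hsum := Finset.sum_le_sum hJb
      linarith
  · simp only [LPObj]
    rw [hEun, finsum_mem_union hEdisj2 (Set.toFinite _) (Set.toFinite _),
      finsum_mem_biUnion_finset _ (𝒮' \ 𝒮) (fun K => K.sub.edgeSet) hpairdisj]
    rw [show (∑ᶠ e ∈ ⋃ K ∈ 𝒮, K.sub.edgeSet, c e * xe' e)
        = ∑ᶠ e ∈ ⋃ K ∈ 𝒮, K.sub.edgeSet, c e * xe e from
      finsum_mem_congr rfl fun e he => by rw [hxe'old e he]]
    rw [show (∑ᶠ K ∈ 𝒦 \ (𝒮' : Set (FullComp G (R : Set V))),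
          (∑ᶠ e ∈ K.sub.edgeSet, c e) * xK' K)
        = ∑ᶠ K ∈ 𝒦 \ (𝒮' : Set (FullComp G (R : Set V))),
          (∑ᶠ e ∈ K.sub.edgeSet, c e) * xK K from
      finsum_mem_congr rfl fun K hK => by
        rw [hxK' K (fun h => hK.2 (Finset.mem_coe.mpr h))]]
    have hJe : ∀ J ∈ 𝒮' \ 𝒮, (∑ᶠ e ∈ J.sub.edgeSet, c e * xe' e)
        = (∑ᶠ e ∈ J.sub.edgeSet, c e) * xK J := by
      intro J hJ
      rw [Finset.mem_sdiff] at hJ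
      rw [finsum_mem_congr rfl (fun e he => by rw [hxe'new J hJ.1 hJ.2 e he]),
        finsum_mem_mul_right]
    rw [Finset.sum_congr rfl hJe]
    rw [← hunionK, finsum_mem_union' hKdisj (hfinsupp _ _) (hfinsupp _ _),
      finsum_mem_coe_finset]
    ring

lemma LPObj_nonneg (c : Sym2 V → ℝ) (hc : ∀ e, 0 ≤ c e)
    (𝒦 : Set (FullComp G (R : Set V))) (𝒮 : Finset (FullComp G (R : Set V)))
    (W : Finset V) (xe : Sym2 V → ℝ) (xK : FullComp G (R : Set V) → ℝ)
    (hx : LPFeasible 𝒦 𝒮 W xe xK) : 0 ≤ LPObj c 𝒦 𝒮 xe xK :=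
  add_nonneg (finsum_mem_nonneg fun e _ => mul_nonneg (hc e) (hx.1 e))
    (finsum_mem_nonneg fun K _ =>
      mul_nonneg (finsum_mem_nonneg fun e _ => hc e) (hx.2.1 K))

/-- If `𝒮 ⊆ 𝒮'`, every feasible solution `x` of `(P_ST^𝒮)` extends to
a feasible solution `x'` of `(P_ST^{𝒮'})` of the same objective value, by setting
`x'_e = x_J` for each edge `e` of each `J ∈ 𝒮' \ 𝒮` and keeping all other coordinates.
Consequently the optimal LP values satisfy `opt(P_ST^{𝒮'}) ≤ opt(P_ST^𝒮)` (so the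
integrality gap of `(P_ST^𝒮)` is at most that of `(P_ST^{𝒮'})`). -/
theorem stmt13 (c : Sym2 V → ℝ) (hc : ∀ e, 0 ≤ c e)
    (𝒦 : Set (FullComp G (R : Set V)))
    (𝒮 𝒮' : Finset (FullComp G (R : Set V)))
    (h𝒮 : 𝒮 ⊆ 𝒮') (h𝒮'𝒦 : (𝒮' : Set (FullComp G (R : Set V))) ⊆ 𝒦)
    -- full components are pairwise edge-disjoint
    (hdisjE : ∀ K K' : FullComp G (R : Set V), K ∈ 𝒦 → K' ∈ 𝒦 → K ≠ K' →
      Disjoint K.sub.edgeSet K'.sub.edgeSet)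
    (W W' : Finset V)
    (hW : (W : Set V) = (R : Set V) ∪ ⋃ K ∈ 𝒮, K.sub.verts)
    (hW' : (W' : Set V) = (R : Set V) ∪ ⋃ K ∈ 𝒮', K.sub.verts)
    (xe : Sym2 V → ℝ) (xK : FullComp G (R : Set V) → ℝ)
    (hx : LPFeasible 𝒦 𝒮 W xe xK)
    (xe' : Sym2 V → ℝ) (xK' : FullComp G (R : Set V) → ℝ)
    (hxe'old : ∀ e ∈ ⋃ K ∈ 𝒮, K.sub.edgeSet, xe' e = xe e)
    (hxe'new : ∀ J ∈ 𝒮', J ∉ 𝒮 → ∀ e ∈ J.sub.edgeSet, xe' e = xK J)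
    (hxK' : ∀ K, K ∉ 𝒮' → xK' K = xK K) (hxK'0 : ∀ K ∈ 𝒮', xK' K = 0)
    (hxe'0 : ∀ e, 0 ≤ xe' e) :
    (LPFeasible 𝒦 𝒮' W' xe' xK' ∧ LPObj c 𝒦 𝒮' xe' xK' = LPObj c 𝒦 𝒮 xe xK) ∧
    sInf {r : ℝ | ∃ ye yK, LPFeasible 𝒦 𝒮' W' ye yK ∧ LPObj c 𝒦 𝒮' ye yK = r} ≤
      sInf {r : ℝ | ∃ ye yK, LPFeasible 𝒦 𝒮 W ye yK ∧ LPObj c 𝒦 𝒮 ye yK = r} := by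
  refine ⟨extend_lemma c 𝒦 𝒮 𝒮' h𝒮 h𝒮'𝒦 hdisjE W W' hW hW' xe xK hx xe' xK'
    hxe'old hxe'new hxK' hxK'0 hxe'0, ?_⟩
  apply csInf_le_csInf
  · exact ⟨0, by rintro r ⟨ye, yK, hfe, rfl⟩; exact LPObj_nonneg c hc 𝒦 𝒮' W' ye yK hfe⟩
  · exact ⟨LPObj c 𝒦 𝒮 xe xK, xe, xK, hx, rfl⟩
  · rintro r ⟨ye, yK, hy, rfl⟩
    set ye' : Sym2 V → ℝ := fun e =>
      if h : ∃ J, J ∈ 𝒮' ∧ J ∉ 𝒮 ∧ e ∈ J.sub.edgeSet then yK h.choose else ye e with hye'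
    set yK' : FullComp G (R : Set V) → ℝ :=
      fun K => if K ∈ 𝒮' then 0 else yK K with hyK'
    have hold : ∀ e ∈ ⋃ K ∈ 𝒮, K.sub.edgeSet, ye' e = ye e := by
      intro e he
      simp only [Set.mem_iUnion, exists_prop] at he
      obtain ⟨K, hK, heK⟩ := he
      simp only [hye']
      rw [dif_neg]
      rintro ⟨J, hJ1, hJ2, hJ3⟩
      exact Set.disjoint_left.mp (hdisjE J K (h𝒮'𝒦 (Finset.mem_coe.mpr hJ1))
        (h𝒮'𝒦 (Finset.mem_coe.mpr (h𝒮 hK))) (fun h => hJ2 (h ▸ hK))) hJ3 heK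
    have hnew : ∀ J ∈ 𝒮', J ∉ 𝒮 → ∀ e ∈ J.sub.edgeSet, ye' e = yK J := by
      intro J hJ1 hJ2 e he
      have hex : ∃ J₀, J₀ ∈ 𝒮' ∧ J₀ ∉ 𝒮 ∧ e ∈ J₀.sub.edgeSet := ⟨J, hJ1, hJ2, he⟩
      simp only [hye']
      rw [dif_pos hex]
      obtain ⟨h1, _, h3⟩ := hex.choose_spec
      by_cases hne : hex.choose = J
      · rw [hne]
      · exact ((Set.disjoint_left.mp (hdisjE _ _ (h𝒮'𝒦 (Finset.mem_coe.mpr h1))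
          (h𝒮'𝒦 (Finset.mem_coe.mpr hJ1)) hne) h3) he).elim
    have h0 : ∀ e, 0 ≤ ye' e := by
      intro e
      simp only [hye']
      by_cases h : ∃ J, J ∈ 𝒮' ∧ J ∉ 𝒮 ∧ e ∈ J.sub.edgeSet
      · rw [dif_pos h]; exact hy.2.1 _
      · rw [dif_neg h]; exact hy.1 e
    have hK'1 : ∀ K, K ∉ 𝒮' → yK' K = yK K := by
      intro K h; simp only [hyK']; exact if_neg h
    have hK'0 : ∀ K ∈ 𝒮', yK' K = 0 := by
      intro K h; simp only [hyK']; exact if_pos h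
    obtain ⟨hfe', hobj'⟩ := extend_lemma c 𝒦 𝒮 𝒮' h𝒮 h𝒮'𝒦 hdisjE W W' hW hW'
      ye yK hy ye' yK' hold hnew hK'1 hK'0 h0
    exact ⟨ye', yK', hfe', hobj'⟩
end
end
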